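/- Let F denote the ℝ-linear bijection ψ: ℍ → ℝ^{1×4}, ψ(a+bi+cj+dk) = (a,b,c,d), extended entrywise to quaternionic row-vector polynomials (with central quaternion coefficients) into real row-vector polynomials. If I ⊆ H_c^{1×ℓ}⟨z,z*⟩ is a left module over H_c⟨z,z*⟩, then J = ψ(I) ⊆ R^{1×4ℓ}⟨x,x*⟩ is a left module over R⟨x,x*⟩; moreover, I is real if and only if J is real. -/

import Mathlib

open scoped BigOperators

namespace NSS

/-- Words in the `2g` free letters `x_1,…,x_g,x_1^*,…,x_g^*`
(a letter is a pair of an index and a `Bool`: `false` = unstarred, `true` = starred). -/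
abbrev Word (g : ℕ) := FreeMonoid (Fin g × Bool)

/-- The free `*`-algebra `ℝ⟨x,x*⟩`. -/
abbrev NC (g : ℕ) := MonoidAlgebra ℝ (Word g)

/-- `ν × ℓ` matrices of noncommutative polynomials. -/
abbrev NCMat (g ν ℓ : ℕ) := Matrix (Fin ν) (Fin ℓ) (NC g)

/-- The involution on words: reverse the word and swap starred/unstarred letters. -/
def wordStar {g : ℕ} (w : Word g) : Word g :=
  FreeMonoid.ofList (((FreeMonoid.toList w).map (fun p => (p.1, !p.2))).reverse)

/-- The involution on `ℝ⟨x,x*⟩`. -/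
noncomputable def ncStar {g : ℕ} (p : NC g) : NC g :=
  MonoidAlgebra.ofCoeff (Finsupp.mapDomain wordStar (p.coeff : Word g →₀ ℝ))

/-- The involution on matrix polynomials: transpose and apply `ncStar` entrywise. -/
noncomputable def matStar {g ν ℓ : ℕ} (p : NCMat g ν ℓ) : NCMat g ℓ ν :=
  Matrix.of fun i j => ncStar (p j i)

/-- The left action of a scalar polynomial on a matrix polynomial
(entrywise left multiplication, identifying `q` with `I ⊗ q`). -/
noncomputable def leftMul {g ν ℓ : ℕ} (q : NC g) (p : NCMat g ν ℓ) : NCMat g ν ℓ :=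
  Matrix.of fun i j => q * p i j

/-- A constant real matrix, viewed as a matrix of noncommutative polynomials. -/
noncomputable def constMat {g m n : ℕ} (A : Matrix (Fin m) (Fin n) ℝ) : NCMat g m n :=
  A.map (algebraMap ℝ (NC g))

/-- The space `ℝ^{ℓ×1}·I + I^*·ℝ^{1×ℓ}`. -/
noncomputable def realPart {g ℓ : ℕ} (I : Set (NCMat g 1 ℓ)) : Submodule ℝ (NCMat g ℓ ℓ) :=
  Submodule.span ℝ
    ({m | ∃ B : Matrix (Fin ℓ) (Fin 1) ℝ, ∃ a ∈ I, m = constMat B * a} ∪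
     {m | ∃ B : Matrix (Fin 1) (Fin ℓ) ℝ, ∃ a ∈ I, m = matStar a * constMat B})

/-- Left `ℝ⟨x,x*⟩`-submodules of `ℝ^{1×ℓ}⟨x,x*⟩`. -/
def IsLeftSubmodule {g ℓ : ℕ} (I : Set (NCMat g 1 ℓ)) : Prop :=
  0 ∈ I ∧ (∀ a b, a ∈ I → b ∈ I → a + b ∈ I) ∧
    (∀ (r : ℝ) a, a ∈ I → r • a ∈ I) ∧ ∀ (q : NC g) a, a ∈ I → leftMul q a ∈ I

/-- A left module `I` is *real* if any finite sum of hermitian squares lying in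
`ℝ^{ℓ×1}·I + I^*·ℝ^{1×ℓ}` has all its terms in `I`. -/
def IsReal {g ℓ : ℕ} (I : Set (NCMat g 1 ℓ)) : Prop :=
  ∀ (n : ℕ) (p : Fin n → NCMat g 1 ℓ),
    (∑ i, matStar (p i) * p i) ∈ realPart I → ∀ i, p i ∈ I

/-- The monomial `e_j ⊗ w ∈ ℝ^{1×ℓ}⟨x,x*⟩`. -/
noncomputable def rowMono {g ℓ : ℕ} (j : Fin ℓ) (w : Word g) : NCMat g 1 ℓ :=
  Matrix.of fun _ j' => if j' = j then (MonoidAlgebra.single w (1:ℝ) : NC g) else 0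

/-- The left `ℝ⟨x,x*⟩`-submodule generated by a set. -/
def leftSpan {g ℓ : ℕ} (G : Set (NCMat g 1 ℓ)) : Set (NCMat g 1 ℓ) :=
  ⋂₀ {J | IsLeftSubmodule J ∧ G ⊆ J}


/-! ### Quaternionic polynomials and the map ψ -/

/-- The free `*`-algebra over the quaternions `ℍ_c⟨z,z*⟩`, with letters commuting
with quaternion coefficients. -/
abbrev QNC (g : ℕ) := MonoidAlgebra (Quaternion ℝ) (Word g)

/-- Matrices of quaternionic noncommutative polynomials. -/
abbrev QMat (g ν ℓ : ℕ) := Matrix (Fin ν) (Fin ℓ) (QNC g)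

/-- The involution on `ℍ_c⟨z,z*⟩`: conjugate coefficients, reverse words, swap
`z_i ↔ z_i^*`. -/
noncomputable def qncStar {g : ℕ} (p : QNC g) : QNC g :=
  MonoidAlgebra.ofCoeff (Finsupp.mapDomain wordStar
    (Finsupp.mapRange (star : Quaternion ℝ → Quaternion ℝ) (star_zero _)
      (p.coeff : Word g →₀ Quaternion ℝ)))

/-- The involution on quaternionic matrix polynomials. -/
noncomputable def qmatStar {g ν ℓ : ℕ} (p : QMat g ν ℓ) : QMat g ℓ ν :=
  Matrix.of fun i j => qncStar (p j i)

/-- Left action of a scalar quaternionic polynomial. -/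
noncomputable def qleftMul {g ν ℓ : ℕ} (q : QNC g) (p : QMat g ν ℓ) : QMat g ν ℓ :=
  Matrix.of fun i j => q * p i j

/-- Left `ℍ_c⟨z,z*⟩`-submodules of `ℍ_c^{1×ℓ}⟨z,z*⟩`. -/
def IsLeftSubmoduleQ {g ℓ : ℕ} (I : Set (QMat g 1 ℓ)) : Prop :=
  0 ∈ I ∧ (∀ a b, a ∈ I → b ∈ I → a + b ∈ I) ∧
    ∀ (q : QNC g) a, a ∈ I → qleftMul q a ∈ I

/-- The space spanned by `q*r + r*q` with `r ∈ I`. -/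
noncomputable def qRealPart {g ℓ : ℕ} (I : Set (QMat g 1 ℓ)) : Submodule ℝ (QMat g ℓ ℓ) :=
  Submodule.span ℝ
    {m | ∃ q : QMat g 1 ℓ, ∃ r ∈ I, m = qmatStar q * r + qmatStar r * q}

/-- Real left module, quaternionic version. -/
def IsRealQ {g ℓ : ℕ} (I : Set (QMat g 1 ℓ)) : Prop :=
  ∀ (n : ℕ) (p : Fin n → QMat g 1 ℓ),
    (∑ i, qmatStar (p i) * p i) ∈ qRealPart I → ∀ i, p i ∈ I

/-- `ψ : ℍ → ℝ^{1×4}`, `ψ(a+bi+cj+dk) = (a,b,c,d)`. -/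
noncomputable def psi0 (q : Quaternion ℝ) : Fin 4 → ℝ := ![q.re, q.imI, q.imJ, q.imK]

lemma psi0_zero (r : Fin 4) : psi0 0 r = 0 := by
  fin_cases r <;> rfl

/-- `ψ` applied coefficientwise to a quaternionic polynomial (`r`-th real component),
renaming the letters `z ↦ x`. -/
noncomputable def psiNC {g : ℕ} (p : QNC g) (r : Fin 4) : NC g :=
  MonoidAlgebra.ofCoeff
    (Finsupp.mapRange (fun q => psi0 q r) (psi0_zero r) (p.coeff : Word g →₀ Quaternion ℝ))

/-- The entrywise extension of `ψ` mapping `ℍ_c^{1×ℓ}⟨z,z*⟩` into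
`ℝ^{1×4ℓ}⟨x,x*⟩` (columns indexed by `Fin ℓ × Fin 4`). -/
noncomputable def Psi {g ℓ : ℕ} (p : QMat g 1 ℓ) : Matrix (Fin 1) (Fin ℓ × Fin 4) (NC g) :=
  Matrix.of fun _ jr => psiNC (p 0 jr.1) jr.2

/-! ### Real-coefficient notions, with general column index type -/

/-- Involution on matrices over `ℝ⟨x,x*⟩` with general index types. -/
noncomputable def matStarG {g : ℕ} {m n : Type} (p : Matrix m n (NC g)) :
    Matrix n m (NC g) :=
  Matrix.of fun i j => ncStar (p j i)

/-- Left action, general column index type. -/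
noncomputable def leftMulG {g : ℕ} {m n : Type} (q : NC g) (p : Matrix m n (NC g)) :
    Matrix m n (NC g) :=
  Matrix.of fun i j => q * p i j

/-- Left `ℝ⟨x,x*⟩`-submodules of row polynomials with column type `c`. -/
def IsLeftSubmoduleG {g : ℕ} {c : Type} (I : Set (Matrix (Fin 1) c (NC g))) : Prop :=
  0 ∈ I ∧ (∀ a b, a ∈ I → b ∈ I → a + b ∈ I) ∧
    (∀ (r : ℝ) a, a ∈ I → r • a ∈ I) ∧ ∀ (q : NC g) a, a ∈ I → leftMulG q a ∈ I

/-- The space `ℝ^{c×1}·I + I*·ℝ^{1×c}`, general column index type. -/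
noncomputable def realPartG {g : ℕ} {c : Type} [Fintype c] [DecidableEq c]
    (I : Set (Matrix (Fin 1) c (NC g))) : Submodule ℝ (Matrix c c (NC g)) :=
  Submodule.span ℝ
    ({m | ∃ B : Matrix c (Fin 1) ℝ, ∃ a ∈ I, m = B.map (algebraMap ℝ (NC g)) * a} ∪
     {m | ∃ B : Matrix (Fin 1) c ℝ, ∃ a ∈ I, m = matStarG a * B.map (algebraMap ℝ (NC g))})

/-- Real left module, general column index type. -/
def IsRealG {g : ℕ} {c : Type} [Fintype c] [DecidableEq c]
    (I : Set (Matrix (Fin 1) c (NC g))) : Prop :=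
  ∀ (n : ℕ) (p : Fin n → Matrix (Fin 1) c (NC g)),
    (∑ i, matStarG (p i) * p i) ∈ realPartG I → ∀ i, p i ∈ I


/-! ### Auxiliary lemmas -/

section Aux

open MonoidAlgebra

variable {g : ℕ}

lemma wordStar_mul (u v : Word g) : wordStar (u * v) = wordStar v * wordStar u := by
  simp [wordStar, FreeMonoid.toList_mul, List.map_append]

lemma wordStar_one : wordStar (1 : Word g) = 1 := rfl

lemma wordStar_wordStar (w : Word g) : wordStar (wordStar w) = w := by
  simp [wordStar, List.map_reverse, List.map_map, Function.comp_def, Bool.not_not]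

lemma ncStar_single (w : Word g) (x : ℝ) :
    ncStar (single w x : NC g) = single (wordStar w) x := by
  simp only [ncStar, MonoidAlgebra.coeff_single, Finsupp.mapDomain_single,
    MonoidAlgebra.ofCoeff_single]

lemma ncStar_zero : ncStar (0 : NC g) = 0 := by simp [ncStar]

lemma ncStar_add (p q : NC g) : ncStar (p + q) = ncStar p + ncStar q := by
  simp only [ncStar, MonoidAlgebra.coeff_add, Finsupp.mapDomain_add, MonoidAlgebra.ofCoeff_add]

lemma ncStar_smul (r : ℝ) (p : NC g) : ncStar (r • p) = r • ncStar p := by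
  simp only [ncStar, MonoidAlgebra.coeff_smul, Finsupp.mapDomain_smul, MonoidAlgebra.ofCoeff_smul]

lemma ncStar_mul (p q : NC g) : ncStar (p * q) = ncStar q * ncStar p := by
  induction p using MonoidAlgebra.induction_linear with
  | zero => simp [ncStar_zero]
  | add f h ihf ihh => rw [add_mul, ncStar_add, ihf, ihh, ncStar_add, mul_add]
  | single w x =>
    induction q using MonoidAlgebra.induction_linear with
    | zero => simp [ncStar_zero]
    | add f h ihf ihh => rw [mul_add, ncStar_add, ihf, ihh, ncStar_add, add_mul]
    | single v y =>
      rw [MonoidAlgebra.single_mul_single, ncStar_single, ncStar_single, ncStar_single,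
        MonoidAlgebra.single_mul_single, wordStar_mul, mul_comm]

lemma ncStar_ncStar (p : NC g) : ncStar (ncStar p) = p := by
  induction p using MonoidAlgebra.induction_linear with
  | zero => simp [ncStar_zero]
  | add f h ihf ihh => rw [ncStar_add, ncStar_add, ihf, ihh]
  | single w x => rw [ncStar_single, ncStar_single, wordStar_wordStar]

lemma qnc_smul_apply (r : ℝ) (p : QNC g) (w : Word g) : (r • p).coeff w = r • p.coeff w := rfl

lemma nc_smul_apply (r : ℝ) (p : NC g) (w : Word g) : (r • p).coeff w = r • p.coeff w := rfl

lemma qncStar_single (w : Word g) (a : Quaternion ℝ) :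
    qncStar (single w a : QNC g) = single (wordStar w) (star a) := by
  simp only [qncStar, MonoidAlgebra.coeff_single, Finsupp.mapRange_single,
    Finsupp.mapDomain_single, MonoidAlgebra.ofCoeff_single]

lemma qncStar_zero : qncStar (0 : QNC g) = 0 := by simp [qncStar]

lemma qncStar_add (p q : QNC g) : qncStar (p + q) = qncStar p + qncStar q := by
  unfold qncStar
  rw [MonoidAlgebra.coeff_add, Finsupp.mapRange_add star_add, Finsupp.mapDomain_add,
    MonoidAlgebra.ofCoeff_add]

lemma qncStar_smul (r : ℝ) (p : QNC g) : qncStar (r • p) = r • qncStar p := by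
  unfold qncStar
  have : Finsupp.mapRange (star : Quaternion ℝ → Quaternion ℝ) (star_zero _) (r • p).coeff
      = r • Finsupp.mapRange (star : Quaternion ℝ → Quaternion ℝ) (star_zero _) p.coeff := by
    refine Finsupp.ext fun w => ?_
    rw [Finsupp.mapRange_apply, qnc_smul_apply, Finsupp.smul_apply, Finsupp.mapRange_apply]
    apply Quaternion.ext <;> simp
  rw [this, Finsupp.mapDomain_smul, MonoidAlgebra.ofCoeff_smul]

lemma qncStar_mul (p q : QNC g) : qncStar (p * q) = qncStar q * qncStar p := by
  induction p using MonoidAlgebra.induction_linear with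
  | zero => simp [qncStar_zero]
  | add f h ihf ihh => rw [add_mul, qncStar_add, ihf, ihh, qncStar_add, mul_add]
  | single w x =>
    induction q using MonoidAlgebra.induction_linear with
    | zero => simp [qncStar_zero]
    | add f h ihf ihh => rw [mul_add, qncStar_add, ihf, ihh, qncStar_add, add_mul]
    | single v y =>
      rw [MonoidAlgebra.single_mul_single, qncStar_single, qncStar_single, qncStar_single,
        MonoidAlgebra.single_mul_single, wordStar_mul, star_mul]

lemma qncStar_qncStar (p : QNC g) : qncStar (qncStar p) = p := by
  induction p using MonoidAlgebra.induction_linear with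
  | zero => simp [qncStar_zero]
  | add f h ihf ihh => rw [qncStar_add, qncStar_add, ihf, ihh]
  | single w x => rw [qncStar_single, qncStar_single, wordStar_wordStar, star_star]

/-- The constant polynomial with quaternion value `c`. -/
noncomputable def qconst (c : Quaternion ℝ) : QNC g := single 1 c

lemma qconst_one : (qconst 1 : QNC g) = 1 := rfl

lemma qconst_mul_single (c a : Quaternion ℝ) (w : Word g) :
    (qconst c : QNC g) * single w a = single w (c * a) := by
  rw [qconst, MonoidAlgebra.single_mul_single, one_mul]

lemma single_mul_qconst (c a : Quaternion ℝ) (w : Word g) :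
    (single w a : QNC g) * qconst c = single w (a * c) := by
  rw [qconst, MonoidAlgebra.single_mul_single, mul_one]

lemma qncStar_qconst (c : Quaternion ℝ) :
    qncStar (qconst c : QNC g) = qconst (star c) := by
  rw [qconst, qncStar_single, wordStar_one, qconst]

/-- Embedding of `ℝ⟨x,x*⟩` into `ℍ_c⟨z,z*⟩`. -/
noncomputable def embQ (p : NC g) : QNC g :=
  MonoidAlgebra.ofCoeff
    (Finsupp.mapRange (algebraMap ℝ (Quaternion ℝ)) (map_zero _) (p.coeff : Word g →₀ ℝ))

lemma embQ_single (w : Word g) (x : ℝ) :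
    embQ (single w x : NC g) = single w (algebraMap ℝ (Quaternion ℝ) x) := by
  simp only [embQ, MonoidAlgebra.coeff_single, Finsupp.mapRange_single,
    MonoidAlgebra.ofCoeff_single]

lemma embQ_zero : embQ (0 : NC g) = 0 := by simp [embQ]

lemma embQ_add (p q : NC g) : embQ (p + q) = embQ p + embQ q := by
  unfold embQ; rw [MonoidAlgebra.coeff_add, Finsupp.mapRange_add (map_add _),
    MonoidAlgebra.ofCoeff_add]

lemma embQ_mul (p q : NC g) : embQ (p * q) = embQ p * embQ q := by
  induction p using MonoidAlgebra.induction_linear with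
  | zero => simp [embQ_zero]
  | add f h ihf ihh => rw [add_mul, embQ_add, ihf, ihh, embQ_add, add_mul]
  | single w x =>
    induction q using MonoidAlgebra.induction_linear with
    | zero => simp [embQ_zero]
    | add f h ihf ihh => rw [mul_add, embQ_add, ihf, ihh, embQ_add, mul_add]
    | single v y =>
      rw [MonoidAlgebra.single_mul_single, embQ_single, embQ_single, embQ_single,
        MonoidAlgebra.single_mul_single, map_mul]

lemma qconst_algebraMap_mul (r : ℝ) (p : QNC g) :
    (qconst (algebraMap ℝ (Quaternion ℝ) r) : QNC g) * p = r • p := by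
  induction p using MonoidAlgebra.induction_linear with
  | zero => simp
  | add f h ihf ihh => rw [mul_add, ihf, ihh, smul_add]
  | single v y =>
    rw [qconst_mul_single, ← Algebra.smul_def]
    exact (MonoidAlgebra.smul_single r v y).symm

lemma qconst_comm_embQ (c : Quaternion ℝ) (p : NC g) :
    (qconst c : QNC g) * embQ p = embQ p * qconst c := by
  induction p using MonoidAlgebra.induction_linear with
  | zero => simp [embQ_zero]
  | add f h ihf ihh => rw [embQ_add, mul_add, add_mul, ihf, ihh]
  | single v y =>
    rw [embQ_single, qconst_mul_single, single_mul_qconst, Algebra.commutes]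

lemma psiNC_single (w : Word g) (a : Quaternion ℝ) (r : Fin 4) :
    psiNC (single w a : QNC g) r = single w (psi0 a r) := by
  simp only [psiNC, MonoidAlgebra.coeff_single, Finsupp.mapRange_single,
    MonoidAlgebra.ofCoeff_single]

lemma psiNC_zero (r : Fin 4) : psiNC (0 : QNC g) r = 0 := by simp [psiNC]

lemma psi0_add (a b : Quaternion ℝ) (r : Fin 4) : psi0 (a + b) r = psi0 a r + psi0 b r := by
  fin_cases r <;> simp [psi0]

lemma psi0_smul (x : ℝ) (a : Quaternion ℝ) (r : Fin 4) : psi0 (x • a) r = x * psi0 a r := by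
  fin_cases r <;> simp [psi0]

lemma psiNC_add (p q : QNC g) (r : Fin 4) : psiNC (p + q) r = psiNC p r + psiNC q r := by
  unfold psiNC; rw [MonoidAlgebra.coeff_add, Finsupp.mapRange_add (fun a b => psi0_add a b r),
    MonoidAlgebra.ofCoeff_add]

lemma psiNC_smul (x : ℝ) (p : QNC g) (r : Fin 4) : psiNC (x • p) r = x • psiNC p r := by
  ext w
  simp [psiNC, Finsupp.mapRange_apply, qnc_smul_apply, nc_smul_apply, psi0_smul, smul_eq_mul]

/-- The quaternion basis `1, i, j, k`. -/
noncomputable def ee : Fin 4 → Quaternion ℝ := ![1, ⟨0,1,0,0⟩, ⟨0,0,1,0⟩, ⟨0,0,0,1⟩]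

lemma ee_re (c : Fin 4) : (ee c).re = ![1, 0, 0, 0] c := by fin_cases c <;> rfl
lemma ee_imI (c : Fin 4) : (ee c).imI = ![0, 1, 0, 0] c := by fin_cases c <;> rfl
lemma ee_imJ (c : Fin 4) : (ee c).imJ = ![0, 0, 1, 0] c := by fin_cases c <;> rfl
lemma ee_imK (c : Fin 4) : (ee c).imK = ![0, 0, 0, 1] c := by fin_cases c <;> rfl

open scoped Quaternion in
lemma qq1 (a : Quaternion ℝ) :
    ∑ c, ee c * algebraMap ℝ (Quaternion ℝ) (psi0 a c) = a := by
  apply Quaternion.ext <;>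
    simp [Fin.sum_univ_four, ee_re, ee_imI, ee_imJ, ee_imK, Quaternion.re_mul, Quaternion.imI_mul, Quaternion.imJ_mul, Quaternion.imK_mul,
      Quaternion.re_star, Quaternion.imI_star, Quaternion.imJ_star, Quaternion.imK_star, psi0] <;> ring

open scoped Quaternion in
lemma qq2 (a : Quaternion ℝ) :
    ∑ c, star (ee c) * algebraMap ℝ (Quaternion ℝ) (psi0 a c) = star a := by
  apply Quaternion.ext <;>
    simp [Fin.sum_univ_four, ee_re, ee_imI, ee_imJ, ee_imK, Quaternion.re_mul, Quaternion.imI_mul, Quaternion.imJ_mul, Quaternion.imK_mul,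
      Quaternion.re_star, Quaternion.imI_star, Quaternion.imJ_star, Quaternion.imK_star, psi0, Quaternion.re_star, Quaternion.imI_star,
      Quaternion.imJ_star, Quaternion.imK_star] <;> ring

open scoped Quaternion in
lemma qq5 (u : Quaternion ℝ) (x : ℝ) (r : Fin 4) :
    psi0 (u * algebraMap ℝ (Quaternion ℝ) x) r = psi0 u r * x := by
  fin_cases r <;> simp [psi0] <;> ring

open scoped Quaternion in
set_option maxHeartbeats 1000000 in
lemma qq3 (a b : Quaternion ℝ) (r s : Fin 4) :
    psi0 (ee r * (star a * b)) s = ∑ c, psi0 (ee c * a) r * psi0 (ee c * b) s := by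
  fin_cases r <;> fin_cases s <;>
    simp [Fin.sum_univ_four, ee_re, ee_imI, ee_imJ, ee_imK, Quaternion.re_mul, Quaternion.imI_mul, Quaternion.imJ_mul, Quaternion.imK_mul,
      Quaternion.re_star, Quaternion.imI_star, Quaternion.imJ_star, Quaternion.imK_star, psi0, Quaternion.re_star, Quaternion.imI_star,
      Quaternion.imJ_star, Quaternion.imK_star, Quaternion.re_mul, Quaternion.imI_mul,
      Quaternion.imJ_mul, Quaternion.imK_mul] <;> ring

lemma qq6 (x : ℝ) (a : Quaternion ℝ) (r : Fin 4) :
    psi0 (algebraMap ℝ (Quaternion ℝ) x * a) r = x * psi0 a r := by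
  rw [← Algebra.smul_def, psi0_smul]

lemma single_sumQ {ι : Type*} (t : Finset ι) (w : Word g) (f : ι → Quaternion ℝ) :
    (single w (∑ c ∈ t, f c) : QNC g) = ∑ c ∈ t, single w (f c) :=
  map_sum (MonoidAlgebra.singleAddHom w) f t

lemma single_sumR {ι : Type*} (t : Finset ι) (w : Word g) (f : ι → ℝ) :
    (single w (∑ c ∈ t, f c) : NC g) = ∑ c ∈ t, single w (f c) :=
  map_sum (MonoidAlgebra.singleAddHom w) f t

lemma psiNC_add' (p q : QNC g) (r : Fin 4) :
    psiNC (p + q) r = psiNC p r + psiNC q r := psiNC_add p q r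

lemma qncStar_add' (p q : QNC g) :
    qncStar (p + q) = qncStar p + qncStar q := qncStar_add p q

lemma ncStar_add' (p q : NC g) :
    ncStar (p + q) = ncStar p + ncStar q := ncStar_add p q

lemma embQ_add' (p q : NC g) :
    embQ (p + q) = embQ p + embQ q := embQ_add p q

lemma reassemble (x : QNC g) :
    ∑ s, (qconst (ee s) : QNC g) * embQ (psiNC x s) = x := by
  induction x using MonoidAlgebra.induction_linear with
  | zero => simp [psiNC_zero, embQ_zero]
  | add f h ihf ihh =>
    simp only [psiNC_add', embQ_add, mul_add, Finset.sum_add_distrib, ihf, ihh]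
  | single w a =>
    simp only [psiNC_single, embQ_single, qconst_mul_single]
    rw [← single_sumQ, qq1]

lemma reassembleStar (x : QNC g) :
    ∑ r, (qconst (star (ee r)) : QNC g) * embQ (ncStar (psiNC x r)) = qncStar x := by
  induction x using MonoidAlgebra.induction_linear with
  | zero => simp [psiNC_zero, ncStar_zero, embQ_zero, qncStar_zero]
  | add f h ihf ihh =>
    simp only [psiNC_add', qncStar_add', ncStar_add, embQ_add, mul_add, Finset.sum_add_distrib,
      ihf, ihh]
  | single w a =>
    simp only [psiNC_single, ncStar_single, embQ_single, qconst_mul_single, qncStar_single]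
    rw [← single_sumQ, qq2]

lemma psiNC_qconst_embQ (u : Quaternion ℝ) (q : NC g) (r : Fin 4) :
    psiNC ((qconst u : QNC g) * embQ q) r = psi0 u r • q := by
  induction q using MonoidAlgebra.induction_linear with
  | zero => simp [embQ_zero, psiNC_zero]
  | add f h ihf ihh => rw [embQ_add, mul_add, psiNC_add, ihf, ihh, smul_add]
  | single w x =>
    rw [embQ_single, qconst_mul_single, psiNC_single, qq5]
    rw [show psi0 u r * x = psi0 u r • x from rfl]
    exact (MonoidAlgebra.smul_single _ _ _).symm

lemma psiNC_embQ_mul (q : NC g) (p : QNC g) (r : Fin 4) :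
    psiNC (embQ q * p) r = q * psiNC p r := by
  induction q using MonoidAlgebra.induction_linear with
  | zero => simp [embQ_zero, psiNC_zero]
  | add f h ihf ihh => rw [embQ_add, add_mul, psiNC_add, ihf, ihh, add_mul]
  | single w x =>
    induction p using MonoidAlgebra.induction_linear with
    | zero => simp [psiNC_zero]
    | add f h ihf ihh => rw [mul_add, psiNC_add, ihf, ihh, psiNC_add, mul_add]
    | single v a =>
      rw [embQ_single, MonoidAlgebra.single_mul_single, psiNC_single, psiNC_single,
        MonoidAlgebra.single_mul_single, qq6]

lemma psiNC_star_mul (p q : QNC g) (r s : Fin 4) :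
    psiNC ((qconst (ee r) : QNC g) * (qncStar p * q)) s
      = ∑ c, ncStar (psiNC ((qconst (ee c) : QNC g) * p) r)
          * psiNC ((qconst (ee c) : QNC g) * q) s := by
  induction p using MonoidAlgebra.induction_linear with
  | zero => simp [qncStar_zero, psiNC_zero, ncStar_zero]
  | add f h ihf ihh =>
    simp only [qncStar_add', add_mul, mul_add, psiNC_add, psiNC_add', ncStar_add,
      Finset.sum_add_distrib, ihf, ihh]
  | single u a =>
    induction q using MonoidAlgebra.induction_linear with
    | zero => simp [psiNC_zero]
    | add f h ihf ihh =>
      simp only [mul_add, psiNC_add, psiNC_add', Finset.sum_add_distrib, ihf, ihh]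
    | single v b =>
      rw [qncStar_single, MonoidAlgebra.single_mul_single, qconst_mul_single, psiNC_single]
      have hc : ∀ c : Fin 4,
          ncStar (psiNC ((qconst (ee c) : QNC g) * single u a) r)
              * psiNC ((qconst (ee c) : QNC g) * single v b) s
            = single (wordStar u * v) (psi0 (ee c * a) r * psi0 (ee c * b) s) := by
        intro c
        rw [qconst_mul_single, qconst_mul_single, psiNC_single, psiNC_single, ncStar_single,
          MonoidAlgebra.single_mul_single]
      simp only [hc]
      rw [← single_sumR, ← qq3]

lemma assemble_star_mul (x y : QNC g) :
    ∑ r, ∑ s, (qconst (star (ee r) * ee s) : QNC g)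
        * embQ (ncStar (psiNC x r) * psiNC y s)
      = qncStar x * y := by
  have key : ∀ r s : Fin 4,
      (qconst (star (ee r) * ee s) : QNC g) * embQ (ncStar (psiNC x r) * psiNC y s)
        = (qconst (star (ee r)) * embQ (ncStar (psiNC x r)))
            * (qconst (ee s) * embQ (psiNC y s)) := by
    intro r s
    have h1 : (qconst (star (ee r) * ee s) : QNC g) = qconst (star (ee r)) * qconst (ee s) := by
      rw [qconst, qconst, qconst, MonoidAlgebra.single_mul_single, one_mul]
    rw [embQ_mul, h1, mul_assoc, mul_assoc, ← mul_assoc (qconst (ee s)), qconst_comm_embQ,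
      mul_assoc]
  simp only [key]
  rw [← Finset.sum_mul_sum, reassembleStar, reassemble]

lemma psiNC_sum {ι : Type*} (t : Finset ι) (f : ι → QNC g) (r : Fin 4) :
    psiNC (∑ i ∈ t, f i) r = ∑ i ∈ t, psiNC (f i) r :=
  map_sum (AddMonoidHom.mk' (fun p => psiNC p r) (fun a b => psiNC_add a b r)) f t

lemma qncStar_sum {ι : Type*} (t : Finset ι) (f : ι → QNC g) :
    qncStar (∑ i ∈ t, f i) = ∑ i ∈ t, qncStar (f i) :=
  map_sum (AddMonoidHom.mk' qncStar qncStar_add) f t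

lemma embQ_smul (x : ℝ) (p : NC g) : embQ (x • p) = x • embQ p := by
  unfold embQ
  rw [MonoidAlgebra.coeff_smul,
    Finsupp.mapRange_smul x p.coeff (fun y => by rw [smul_eq_mul, map_mul, ← Algebra.smul_def]),
    MonoidAlgebra.ofCoeff_smul]

lemma qconst_sum {ι : Type*} (t : Finset ι) (f : ι → Quaternion ℝ) :
    (qconst (∑ i ∈ t, f i) : QNC g) = ∑ i ∈ t, qconst (f i) := single_sumQ t 1 f

lemma qconst_smul (x : ℝ) (a : Quaternion ℝ) :
    (qconst (x • a) : QNC g) = x • qconst a := (MonoidAlgebra.smul_single x 1 a).symm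

lemma qconst_mul (a b : Quaternion ℝ) :
    (qconst (a * b) : QNC g) = qconst a * qconst b := by
  rw [qconst, qconst, qconst, MonoidAlgebra.single_mul_single, one_mul]

lemma algebraMap_NC (y : ℝ) : algebraMap ℝ (NC g) y = single 1 y := rfl

lemma embQ_algebraMap (y : ℝ) :
    embQ (algebraMap ℝ (NC g) y) = qconst (algebraMap ℝ (Quaternion ℝ) y) := by
  rw [algebraMap_NC, embQ_single, qconst]

open scoped Quaternion in
lemma delta_sum (r : Fin 4) (Q : Fin 4 → NC g) :
    ∑ c, psi0 (ee c) r • Q c = Q r := by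
  fin_cases r <;> simp [Fin.sum_univ_four, ee_re, ee_imI, ee_imJ, ee_imK, Quaternion.re_mul, Quaternion.imI_mul, Quaternion.imJ_mul, Quaternion.imK_mul,
      Quaternion.re_star, Quaternion.imI_star, Quaternion.imJ_star, Quaternion.imK_star, psi0]

/-- Scalar computation behind `AMat` of a left generator. -/
lemma amat_scalarL (β : Fin 4 → ℝ) (x : QNC g) :
    ∑ r, ∑ s, (qconst (star (ee r) * ee s) : QNC g)
        * embQ (algebraMap ℝ (NC g) (β r) * psiNC x s)
      = qconst (∑ r, β r • star (ee r)) * x := by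
  have key : ∀ r s : Fin 4,
      (qconst (star (ee r) * ee s) : QNC g) * embQ (algebraMap ℝ (NC g) (β r) * psiNC x s)
        = β r • (qconst (star (ee r)) * (qconst (ee s) * embQ (psiNC x s))) := by
    intro r s
    rw [embQ_mul, embQ_algebraMap, qconst_mul]
    have h2 : (qconst (algebraMap ℝ (Quaternion ℝ) (β r)) : QNC g) * embQ (psiNC x s)
        = β r • embQ (psiNC x s) := qconst_algebraMap_mul _ _
    rw [mul_assoc, h2, mul_smul_comm, mul_smul_comm]
  simp only [key]
  have h3 : ∀ r : Fin 4,
      ∑ s, β r • ((qconst (star (ee r)) : QNC g) * (qconst (ee s) * embQ (psiNC x s)))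
        = β r • ((qconst (star (ee r)) : QNC g) * x) := by
    intro r
    rw [← Finset.smul_sum, ← Finset.mul_sum, reassemble]
  simp only [h3]
  rw [qconst_sum]
  simp only [qconst_smul]
  rw [Finset.sum_mul]
  simp only [smul_mul_assoc]

/-- Scalar computation behind `AMat` of a right generator. -/
lemma amat_scalarR (β : Fin 4 → ℝ) (x : QNC g) :
    ∑ r, ∑ s, (qconst (star (ee r) * ee s) : QNC g)
        * embQ (ncStar (psiNC x r) * algebraMap ℝ (NC g) (β s))
      = qncStar x * qconst (∑ s, β s • ee s) := by
  have key : ∀ r s : Fin 4,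
      (qconst (star (ee r) * ee s) : QNC g)
          * embQ (ncStar (psiNC x r) * algebraMap ℝ (NC g) (β s))
        = β s • ((qconst (star (ee r)) : QNC g) * embQ (ncStar (psiNC x r)) * qconst (ee s)) := by
    intro r s
    rw [embQ_mul, embQ_algebraMap, qconst_mul, ← qconst_comm_embQ, qconst_algebraMap_mul,
      mul_smul_comm, mul_assoc, qconst_comm_embQ, ← mul_assoc]
  simp only [key]
  rw [Finset.sum_comm]
  have h3 : ∀ s : Fin 4,
      ∑ r, β s • ((qconst (star (ee r)) : QNC g) * embQ (ncStar (psiNC x r)) * qconst (ee s))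
        = β s • (qncStar x * qconst (ee s)) := by
    intro s
    rw [← Finset.smul_sum, ← Finset.sum_mul, reassembleStar]
  simp only [h3]
  rw [qconst_sum, Finset.mul_sum]
  refine Finset.sum_congr rfl fun s _ => ?_
  rw [qconst_smul, mul_smul_comm]

end Aux

section MatrixLayer

open MonoidAlgebra

variable {g ℓ : ℕ}

lemma psi0_inj {a b : Quaternion ℝ} (h : ∀ r, psi0 a r = psi0 b r) : a = b := by
  apply Quaternion.ext
  · simpa [psi0] using h 0
  · simpa [psi0] using h 1
  · simpa [psi0] using h 2
  · simpa [psi0] using h 3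

lemma Psi_entry (p : QMat g 1 ℓ) (i : Fin 1) (jr : Fin ℓ × Fin 4) :
    Psi p i jr = psiNC (p 0 jr.1) jr.2 := rfl

lemma Psi_zero : Psi (0 : QMat g 1 ℓ) = 0 := by
  funext i jr
  rw [Psi_entry, Matrix.zero_apply, Matrix.zero_apply, psiNC_zero]

lemma Psi_add (a b : QMat g 1 ℓ) : Psi (a + b) = Psi a + Psi b := by
  funext i jr
  rw [Psi_entry, Matrix.add_apply, Matrix.add_apply, psiNC_add, Psi_entry, Psi_entry]

lemma Psi_smul (x : ℝ) (a : QMat g 1 ℓ) : Psi (x • a) = x • Psi a := by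
  funext i jr
  rw [Psi_entry, Matrix.smul_apply, Matrix.smul_apply, psiNC_smul, Psi_entry]

lemma Psi_injective {p q : QMat g 1 ℓ} (h : Psi p = Psi q) : p = q := by
  funext i j
  have hi : i = 0 := Subsingleton.elim _ _
  subst hi
  refine MonoidAlgebra.ext (Finsupp.ext fun w => ?_)
  refine psi0_inj fun r => ?_
  have h2 := congrFun (congrFun h 0) (j, r)
  rw [Psi_entry, Psi_entry] at h2
  have h3 := congrArg (fun x => x.coeff w) h2
  simpa [psiNC, Finsupp.mapRange_apply] using h3

/-- The inverse of `Psi`. -/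
noncomputable def Theta (P : Matrix (Fin 1) (Fin ℓ × Fin 4) (NC g)) : QMat g 1 ℓ :=
  Matrix.of fun _ j => ∑ c, (qconst (ee c) : QNC g) * embQ (P 0 (j, c))

lemma Psi_Theta (P : Matrix (Fin 1) (Fin ℓ × Fin 4) (NC g)) : Psi (Theta P) = P := by
  funext i jr
  obtain ⟨j, r⟩ := jr
  have hi : i = 0 := Subsingleton.elim _ _
  subst hi
  rw [Psi_entry]
  show psiNC (∑ c, (qconst (ee c) : QNC g) * embQ (P 0 (j, c))) r = P 0 (j, r)
  rw [psiNC_sum]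
  simp only [psiNC_qconst_embQ]
  exact delta_sum r fun c => P 0 (j, c)

/-- `Psi` applied to `e_c • p`. -/
noncomputable def PsiC (c : Fin 4) (p : QMat g 1 ℓ) : Matrix (Fin 1) (Fin ℓ × Fin 4) (NC g) :=
  Psi (qleftMul (qconst (ee c)) p)

lemma PsiC_entry (c : Fin 4) (p : QMat g 1 ℓ) (i : Fin 1) (jr : Fin ℓ × Fin 4) :
    PsiC c p i jr = psiNC ((qconst (ee c) : QNC g) * p 0 jr.1) jr.2 := rfl

lemma ee_zero : ee 0 = 1 := rfl

lemma PsiC_zero (p : QMat g 1 ℓ) : PsiC 0 p = Psi p := by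
  unfold PsiC
  have h : qleftMul (qconst (ee 0)) p = p := by
    funext i j
    show (qconst (ee 0) : QNC g) * p i j = p i j
    rw [ee_zero, qconst_one, one_mul]
  rw [h]

lemma Psi_leftMul (q : NC g) (a : QMat g 1 ℓ) :
    Psi (qleftMul (embQ q) a) = leftMulG q (Psi a) := by
  funext i jr
  rw [Psi_entry]
  show psiNC (embQ q * a 0 jr.1) jr.2 = q * Psi a i jr
  rw [psiNC_embQ_mul, Psi_entry]

lemma qleftMul_alg (x : ℝ) (a : QMat g 1 ℓ) :
    qleftMul (qconst (algebraMap ℝ (Quaternion ℝ) x)) a = x • a := by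
  funext i j
  show (qconst (algebraMap ℝ (Quaternion ℝ) x) : QNC g) * a i j = (x • a) i j
  rw [qconst_algebraMap_mul, Matrix.smul_apply]

/-- The block map `Φ` on `ℓ×ℓ` quaternionic matrix polynomials. -/
noncomputable def Phi2 (m : Matrix (Fin ℓ) (Fin ℓ) (QNC g)) :
    Matrix (Fin ℓ × Fin 4) (Fin ℓ × Fin 4) (NC g) :=
  Matrix.of fun jr ks => psiNC ((qconst (ee jr.2) : QNC g) * m jr.1 ks.1) ks.2

/-- The assembly map, a left inverse of `Phi2`. -/
noncomputable def AMat (m : Matrix (Fin ℓ × Fin 4) (Fin ℓ × Fin 4) (NC g)) :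
    Matrix (Fin ℓ) (Fin ℓ) (QNC g) :=
  Matrix.of fun j k => ∑ r, ∑ s, (qconst (star (ee r) * ee s) : QNC g) * embQ (m (j, r) (k, s))

lemma Phi2_zero : Phi2 (0 : Matrix (Fin ℓ) (Fin ℓ) (QNC g)) = 0 := by
  funext jr ks
  show psiNC ((qconst (ee jr.2) : QNC g) * (0 : Matrix (Fin ℓ) (Fin ℓ) (QNC g)) jr.1 ks.1) ks.2
      = 0
  rw [Matrix.zero_apply, mul_zero, psiNC_zero]

lemma Phi2_add (m1 m2 : Matrix (Fin ℓ) (Fin ℓ) (QNC g)) :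
    Phi2 (m1 + m2) = Phi2 m1 + Phi2 m2 := by
  funext jr ks
  show psiNC ((qconst (ee jr.2) : QNC g) * (m1 + m2) jr.1 ks.1) ks.2 = _
  rw [Matrix.add_apply, mul_add, psiNC_add, Matrix.add_apply]
  rfl

lemma Phi2_smul (x : ℝ) (m : Matrix (Fin ℓ) (Fin ℓ) (QNC g)) :
    Phi2 (x • m) = x • Phi2 m := by
  funext jr ks
  show psiNC ((qconst (ee jr.2) : QNC g) * (x • m) jr.1 ks.1) ks.2 = _
  rw [Matrix.smul_apply, mul_smul_comm, psiNC_smul, Matrix.smul_apply]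
  rfl

lemma AMat_zero : AMat (0 : Matrix (Fin ℓ × Fin 4) (Fin ℓ × Fin 4) (NC g)) = 0 := by
  funext j k
  show ∑ r, ∑ s, (qconst (star (ee r) * ee s) : QNC g) * embQ (0 : NC g) = _
  simp [embQ_zero]

lemma AMat_add (m1 m2 : Matrix (Fin ℓ × Fin 4) (Fin ℓ × Fin 4) (NC g)) :
    AMat (m1 + m2) = AMat m1 + AMat m2 := by
  funext j k
  show ∑ r, ∑ s, (qconst (star (ee r) * ee s) : QNC g) * embQ ((m1 + m2) (j, r) (k, s)) = _
  simp only [Matrix.add_apply, embQ_add', embQ_add, mul_add, Finset.sum_add_distrib]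
  rfl

lemma AMat_smul (x : ℝ) (m : Matrix (Fin ℓ × Fin 4) (Fin ℓ × Fin 4) (NC g)) :
    AMat (x • m) = x • AMat m := by
  funext j k
  show ∑ r, ∑ s, (qconst (star (ee r) * ee s) : QNC g) * embQ ((x • m) (j, r) (k, s)) = _
  simp only [Matrix.smul_apply, embQ_smul, mul_smul_comm, ← Finset.smul_sum]
  rfl

lemma qmatStar_zero : qmatStar (0 : Matrix (Fin ℓ) (Fin ℓ) (QNC g)) = 0 := by
  funext j k
  show qncStar ((0 : Matrix (Fin ℓ) (Fin ℓ) (QNC g)) k j) = 0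
  rw [Matrix.zero_apply, qncStar_zero]

lemma qmatStar_add (m1 m2 : Matrix (Fin ℓ) (Fin ℓ) (QNC g)) :
    qmatStar (m1 + m2) = qmatStar m1 + qmatStar m2 := by
  funext j k
  show qncStar ((m1 + m2) k j) = _
  rw [Matrix.add_apply, qncStar_add, Matrix.add_apply]
  rfl

lemma qmatStar_smul (x : ℝ) (m : Matrix (Fin ℓ) (Fin ℓ) (QNC g)) :
    qmatStar (x • m) = x • qmatStar m := by
  funext j k
  show qncStar ((x • m) k j) = _
  rw [Matrix.smul_apply, qncStar_smul, Matrix.smul_apply]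
  rfl

lemma qmatStar_sum {ι : Type*} (t : Finset ι) (f : ι → Matrix (Fin ℓ) (Fin ℓ) (QNC g)) :
    qmatStar (∑ i ∈ t, f i) = ∑ i ∈ t, qmatStar (f i) := by
  classical
  induction t using Finset.induction_on with
  | empty => simp [qmatStar_zero]
  | insert _ _ h ih => rw [Finset.sum_insert h, Finset.sum_insert h, qmatStar_add, ih]

lemma AMat_sum {ι : Type*} (t : Finset ι)
    (f : ι → Matrix (Fin ℓ × Fin 4) (Fin ℓ × Fin 4) (NC g)) :
    AMat (∑ i ∈ t, f i) = ∑ i ∈ t, AMat (f i) := by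
  classical
  induction t using Finset.induction_on with
  | empty => simp [AMat_zero]
  | insert _ _ h ih => rw [Finset.sum_insert h, Finset.sum_insert h, AMat_add, ih]

lemma Phi2_sum {ι : Type*} (t : Finset ι) (f : ι → Matrix (Fin ℓ) (Fin ℓ) (QNC g)) :
    Phi2 (∑ i ∈ t, f i) = ∑ i ∈ t, Phi2 (f i) := by
  classical
  induction t using Finset.induction_on with
  | empty => simp [Phi2_zero]
  | insert _ _ h ih => rw [Finset.sum_insert h, Finset.sum_insert h, Phi2_add, ih]

lemma qmatStar_mulstar (a b : QMat g 1 ℓ) : qmatStar (qmatStar a * b) = qmatStar b * a := by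
  funext j k
  show qncStar ((qmatStar a * b) k j) = (qmatStar b * a) j k
  rw [Matrix.mul_apply, Fin.sum_univ_one, Matrix.mul_apply, Fin.sum_univ_one]
  show qncStar (qncStar (a 0 k) * b 0 j) = qncStar (b 0 j) * a 0 k
  rw [qncStar_mul, qncStar_qncStar]

lemma Phi2_hermsq (p q : QMat g 1 ℓ) :
    Phi2 (qmatStar p * q) = ∑ c, matStarG (PsiC c p) * PsiC c q := by
  funext jr ks
  rw [show (∑ c, matStarG (PsiC c p) * PsiC c q) jr ks
      = ∑ c, (matStarG (PsiC c p) * PsiC c q) jr ks by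
    rw [Matrix.sum_apply]]
  have hrhs : ∀ c : Fin 4, (matStarG (PsiC c p) * PsiC c q) jr ks
      = ncStar (psiNC ((qconst (ee c) : QNC g) * p 0 jr.1) jr.2)
          * psiNC ((qconst (ee c) : QNC g) * q 0 ks.1) ks.2 := by
    intro c
    rw [Matrix.mul_apply, Fin.sum_univ_one]
    rfl
  simp only [hrhs]
  show psiNC ((qconst (ee jr.2) : QNC g) * (qmatStar p * q) jr.1 ks.1) ks.2 = _
  rw [Matrix.mul_apply, Fin.sum_univ_one]
  exact psiNC_star_mul (p 0 jr.1) (q 0 ks.1) jr.2 ks.2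

lemma AMat_hermsq (p q : QMat g 1 ℓ) :
    AMat (matStarG (Psi p) * Psi q) = qmatStar p * q := by
  funext j k
  show ∑ r, ∑ s, (qconst (star (ee r) * ee s) : QNC g)
      * embQ ((matStarG (Psi p) * Psi q) (j, r) (k, s)) = (qmatStar p * q) j k
  have hin : ∀ (r s : Fin 4), (matStarG (Psi p) * Psi q) (j, r) (k, s)
      = ncStar (psiNC (p 0 j) r) * psiNC (q 0 k) s := by
    intro r s
    rw [Matrix.mul_apply, Fin.sum_univ_one]
    rfl
  simp only [hin]
  rw [Matrix.mul_apply, Fin.sum_univ_one]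
  exact assemble_star_mul (p 0 j) (q 0 k)

end MatrixLayer

section Transfer

open MonoidAlgebra

variable {g ℓ : ℕ}

lemma AMat_genL (B : Matrix (Fin ℓ × Fin 4) (Fin 1) ℝ) (r' : QMat g 1 ℓ) :
    AMat (B.map (algebraMap ℝ (NC g)) * Psi r')
      = qmatStar (Matrix.of fun (_ : Fin 1) j =>
          (qconst (star (∑ r, B (j, r) 0 • star (ee r))) : QNC g)) * r' := by
  funext j k
  show ∑ r, ∑ s, (qconst (star (ee r) * ee s) : QNC g)
      * embQ ((B.map (algebraMap ℝ (NC g)) * Psi r') (j, r) (k, s)) = _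
  have hin : ∀ (r s : Fin 4), (B.map (algebraMap ℝ (NC g)) * Psi r') (j, r) (k, s)
      = algebraMap ℝ (NC g) (B (j, r) 0) * psiNC (r' 0 k) s := by
    intro r s
    rw [Matrix.mul_apply, Fin.sum_univ_one]
    rfl
  simp only [hin]
  rw [amat_scalarL (fun r => B (j, r) 0) (r' 0 k), Matrix.mul_apply, Fin.sum_univ_one]
  show _ = qncStar ((qconst (star (∑ r, B (j, r) 0 • star (ee r))) : QNC g)) * r' 0 k
  rw [qncStar_qconst, star_star]

lemma AMat_genR (B : Matrix (Fin 1) (Fin ℓ × Fin 4) ℝ) (r' : QMat g 1 ℓ) :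
    AMat (matStarG (Psi r') * B.map (algebraMap ℝ (NC g)))
      = qmatStar r' * (Matrix.of fun (_ : Fin 1) k =>
          (qconst (∑ s, B 0 (k, s) • ee s) : QNC g)) := by
  funext j k
  show ∑ r, ∑ s, (qconst (star (ee r) * ee s) : QNC g)
      * embQ ((matStarG (Psi r') * B.map (algebraMap ℝ (NC g))) (j, r) (k, s)) = _
  have hin : ∀ (r s : Fin 4), (matStarG (Psi r') * B.map (algebraMap ℝ (NC g))) (j, r) (k, s)
      = ncStar (psiNC (r' 0 j) r) * algebraMap ℝ (NC g) (B 0 (k, s)) := by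
    intro r s
    rw [Matrix.mul_apply, Fin.sum_univ_one]
    rfl
  simp only [hin]
  rw [amat_scalarR (fun s => B 0 (k, s)) (r' 0 j), Matrix.mul_apply, Fin.sum_univ_one]
  rfl

lemma starmul_mem_realPartG {c : Type} [Fintype c] [DecidableEq c]
    (J : Set (Matrix (Fin 1) c (NC g))) (hJ : IsLeftSubmoduleG J)
    (Q R : Matrix (Fin 1) c (NC g)) (hR : R ∈ J) :
    matStarG Q * R ∈ realPartG J ∧ matStarG R * Q ∈ realPartG J := by
  constructor
  · have hdecomp : matStarG Q * R
        = ∑ k, (Matrix.of fun u (_ : Fin 1) =>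
            if u = k then (1:ℝ) else 0).map (algebraMap ℝ (NC g))
              * leftMulG (ncStar (Q 0 k)) R := by
      funext u v
      rw [Matrix.sum_apply]
      have hterm : ∀ k : c, ((Matrix.of fun u (_ : Fin 1) =>
          if u = k then (1:ℝ) else 0).map (algebraMap ℝ (NC g))
            * leftMulG (ncStar (Q 0 k)) R) u v
          = if u = k then ncStar (Q 0 k) * R 0 v else 0 := by
        intro k
        rw [Matrix.mul_apply, Fin.sum_univ_one]
        show algebraMap ℝ (NC g) (if u = k then (1:ℝ) else 0) * (ncStar (Q 0 k) * R 0 v) = _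
        rw [apply_ite (algebraMap ℝ (NC g)), map_one, map_zero, ite_mul, one_mul, zero_mul]
      simp only [hterm]
      rw [Finset.sum_ite_eq, if_pos (Finset.mem_univ u)]
      show (matStarG Q * R) u v = ncStar (Q 0 u) * R 0 v
      rw [Matrix.mul_apply, Fin.sum_univ_one]
      rfl
    rw [hdecomp]
    exact Submodule.sum_mem _ fun k _ => Submodule.subset_span
      (Or.inl ⟨_, _, hJ.2.2.2 _ _ hR, rfl⟩)
  · have hdecomp : matStarG R * Q
        = ∑ k, matStarG (leftMulG (ncStar (Q 0 k)) R)
            * (Matrix.of fun (_ : Fin 1) v => if v = k then (1:ℝ) else 0).map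
              (algebraMap ℝ (NC g)) := by
      funext u v
      rw [Matrix.sum_apply]
      have hterm : ∀ k : c, (matStarG (leftMulG (ncStar (Q 0 k)) R)
          * (Matrix.of fun (_ : Fin 1) v => if v = k then (1:ℝ) else 0).map
            (algebraMap ℝ (NC g))) u v
          = if v = k then ncStar (R 0 u) * Q 0 k else 0 := by
        intro k
        rw [Matrix.mul_apply, Fin.sum_univ_one]
        show ncStar (ncStar (Q 0 k) * R 0 u) * algebraMap ℝ (NC g) (if v = k then (1:ℝ) else 0)
            = _
        rw [ncStar_mul, ncStar_ncStar, apply_ite (algebraMap ℝ (NC g)), map_one, map_zero,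
          mul_ite, mul_one, mul_zero]
      simp only [hterm]
      rw [Finset.sum_ite_eq, if_pos (Finset.mem_univ v)]
      show (matStarG R * Q) u v = ncStar (R 0 u) * Q 0 v
      rw [Matrix.mul_apply, Fin.sum_univ_one]
      rfl
    rw [hdecomp]
    exact Submodule.sum_mem _ fun k _ => Submodule.subset_span
      (Or.inr ⟨_, _, hJ.2.2.2 _ _ hR, rfl⟩)

lemma Phi2_transfer (I : Set (QMat g 1 ℓ)) (hI : IsLeftSubmoduleQ I)
    (hJ : IsLeftSubmoduleG (Psi '' I)) :
    ∀ m ∈ qRealPart I, Phi2 m ∈ realPartG (Psi '' I) := by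
  intro m hm
  induction hm using Submodule.span_induction with
  | mem x hx =>
    obtain ⟨q, r, hr, rfl⟩ := hx
    rw [Phi2_add, Phi2_hermsq, Phi2_hermsq]
    have hmemc : ∀ c : Fin 4, PsiC c r ∈ Psi '' I :=
      fun c => ⟨qleftMul (qconst (ee c)) r, hI.2.2 _ _ hr, rfl⟩
    refine Submodule.add_mem _ (Submodule.sum_mem _ fun c _ => ?_)
      (Submodule.sum_mem _ fun c _ => ?_)
    · exact (starmul_mem_realPartG _ hJ (PsiC c q) (PsiC c r) (hmemc c)).1
    · exact (starmul_mem_realPartG _ hJ (PsiC c q) (PsiC c r) (hmemc c)).2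
  | zero => rw [Phi2_zero]; exact Submodule.zero_mem _
  | add x y hx hy ihx ihy => rw [Phi2_add]; exact Submodule.add_mem _ ihx ihy
  | smul a x hx ih => rw [Phi2_smul]; exact Submodule.smul_mem _ _ ih

/-- The set of products `q* r` and `r* q` with `r ∈ I`. -/
def TT (I : Set (QMat g 1 ℓ)) : Set (Matrix (Fin ℓ) (Fin ℓ) (QNC g)) :=
  {m | ∃ q : QMat g 1 ℓ, ∃ r ∈ I, m = qmatStar q * r} ∪
    {m | ∃ q : QMat g 1 ℓ, ∃ r ∈ I, m = qmatStar r * q}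

lemma AMat_transfer (I : Set (QMat g 1 ℓ)) :
    ∀ m ∈ realPartG (Psi '' I), AMat m ∈ Submodule.span ℝ (TT I) := by
  intro m hm
  induction hm using Submodule.span_induction with
  | mem x hx =>
    rcases hx with ⟨B, a, ⟨r', hr', rfl⟩, rfl⟩ | ⟨B, a, ⟨r', hr', rfl⟩, rfl⟩
    · rw [AMat_genL]
      exact Submodule.subset_span (Or.inl ⟨_, r', hr', rfl⟩)
    · rw [AMat_genR]
      exact Submodule.subset_span (Or.inr ⟨_, r', hr', rfl⟩)
  | zero => rw [AMat_zero]; exact Submodule.zero_mem _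
  | add x y hx hy ihx ihy => rw [AMat_add]; exact Submodule.add_mem _ ihx ihy
  | smul a x hx ih => rw [AMat_smul]; exact Submodule.smul_mem _ _ ih

lemma herm_span_TT (I : Set (QMat g 1 ℓ)) (m : Matrix (Fin ℓ) (Fin ℓ) (QNC g))
    (hm : m ∈ Submodule.span ℝ (TT I)) :
    (2⁻¹ : ℝ) • (m + qmatStar m) ∈ qRealPart I := by
  induction hm using Submodule.span_induction with
  | mem x hx =>
    rcases hx with ⟨q, r, hr, rfl⟩ | ⟨q, r, hr, rfl⟩
    · rw [qmatStar_mulstar]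
      exact Submodule.smul_mem _ _ (Submodule.subset_span ⟨q, r, hr, rfl⟩)
    · rw [qmatStar_mulstar, add_comm]
      exact Submodule.smul_mem _ _ (Submodule.subset_span ⟨q, r, hr, rfl⟩)
  | zero =>
    rw [qmatStar_zero, add_zero, smul_zero]
    exact Submodule.zero_mem _
  | add x y hx hy ihx ihy =>
    have h : (2⁻¹ : ℝ) • (x + y + qmatStar (x + y))
        = (2⁻¹ : ℝ) • (x + qmatStar x) + (2⁻¹ : ℝ) • (y + qmatStar y) := by
      rw [qmatStar_add, ← smul_add]
      congr 1
      abel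
    rw [h]
    exact Submodule.add_mem _ ihx ihy
  | smul a x hx ih =>
    have h : (2⁻¹ : ℝ) • (a • x + qmatStar (a • x))
        = a • ((2⁻¹ : ℝ) • (x + qmatStar x)) := by
      rw [qmatStar_smul, ← smul_add, smul_comm]
    rw [h]
    exact Submodule.smul_mem _ _ ih

end Transfer


/-- if `I ⊆ ℍ_c^{1×ℓ}⟨z,z*⟩` is a left module, then `J = ψ(I)` is a left
`ℝ⟨x,x*⟩`-module, and `I` is real iff `J` is real. -/
theorem stmt17 {g ℓ : ℕ} (I : Set (QMat g 1 ℓ)) (hI : IsLeftSubmoduleQ I) :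
    IsLeftSubmoduleG (Psi '' I) ∧ (IsRealQ I ↔ IsRealG (Psi '' I)) := by
  have hJ : IsLeftSubmoduleG (Psi '' I) := by
    refine ⟨⟨0, hI.1, Psi_zero⟩, ?_, ?_, ?_⟩
    · rintro _ _ ⟨a, ha, rfl⟩ ⟨b, hb, rfl⟩
      exact ⟨a + b, hI.2.1 a b ha hb, Psi_add a b⟩
    · rintro x _ ⟨a, ha, rfl⟩
      refine ⟨qleftMul (qconst (algebraMap ℝ (Quaternion ℝ) x)) a, hI.2.2 _ _ ha, ?_⟩
      rw [qleftMul_alg, Psi_smul]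
    · rintro q _ ⟨a, ha, rfl⟩
      exact ⟨qleftMul (embQ q) a, hI.2.2 _ _ ha, Psi_leftMul q a⟩
  refine ⟨hJ, ?_, ?_⟩
  · -- IsRealQ I → IsRealG (Psi '' I)
    intro hreal n P hP i
    set p : Fin n → QMat g 1 ℓ := fun i => Theta (P i) with hpdef
    have hPp : ∀ i, P i = Psi (p i) := fun i => (Psi_Theta (P i)).symm
    have h1 : AMat (∑ i, matStarG (P i) * P i) ∈ Submodule.span ℝ (TT I) :=
      AMat_transfer I _ hP
    have hsum : AMat (∑ i, matStarG (P i) * P i) = ∑ i, qmatStar (p i) * p i := by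
      rw [AMat_sum]
      refine Finset.sum_congr rfl fun i _ => ?_
      rw [hPp i, AMat_hermsq]
    rw [hsum] at h1
    have hherm : qmatStar (∑ i, qmatStar (p i) * p i) = ∑ i, qmatStar (p i) * p i := by
      rw [qmatStar_sum]
      exact Finset.sum_congr rfl fun i _ => qmatStar_mulstar _ _
    have h2 : (∑ i, qmatStar (p i) * p i) ∈ qRealPart I := by
      have h3 := herm_span_TT I _ h1
      rw [hherm] at h3
      have e : (2⁻¹ : ℝ) • ((∑ i, qmatStar (p i) * p i) + (∑ i, qmatStar (p i) * p i))
          = ∑ i, qmatStar (p i) * p i := by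
        rw [← two_smul ℝ, smul_smul]
        norm_num
      rwa [e] at h3
    have hi := hreal n p h2 i
    rw [hPp i]
    exact ⟨p i, hi, rfl⟩
  · -- IsRealG (Psi '' I) → IsRealQ I
    intro hrealG n p hp i
    set P' : Fin (n * 4) → Matrix (Fin 1) (Fin ℓ × Fin 4) (NC g) :=
      fun t => PsiC (finProdFinEquiv.symm t).2 (p ((finProdFinEquiv.symm t).1)) with hP'def
    have hsum2 : ∑ t, matStarG (P' t) * P' t = Phi2 (∑ i, qmatStar (p i) * p i) := by
      rw [Phi2_sum]
      rw [show (∑ t, matStarG (P' t) * P' t)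
          = ∑ x : Fin n × Fin 4, matStarG (PsiC x.2 (p x.1)) * PsiC x.2 (p x.1) from
        Equiv.sum_comp finProdFinEquiv.symm
          (fun x => matStarG (PsiC x.2 (p x.1)) * PsiC x.2 (p x.1))]
      rw [Fintype.sum_prod_type]
      exact Finset.sum_congr rfl fun i _ => (Phi2_hermsq (p i) (p i)).symm
    have hmem : Phi2 (∑ i, qmatStar (p i) * p i) ∈ realPartG (Psi '' I) :=
      Phi2_transfer I hI hJ _ hp
    rw [← hsum2] at hmem
    have hall := hrealG (n * 4) P' hmem (finProdFinEquiv (i, 0))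
    have hP'i : P' (finProdFinEquiv (i, 0)) = Psi (p i) := by
      rw [hP'def]
      show PsiC (finProdFinEquiv.symm (finProdFinEquiv (i, 0))).2
          (p ((finProdFinEquiv.symm (finProdFinEquiv (i, 0))).1)) = Psi (p i)
      rw [Equiv.symm_apply_apply]
      exact PsiC_zero (p i)
    rw [hP'i] at hall
    obtain ⟨a, ha, heq⟩ := hall
    rwa [← Psi_injective heq]

end NSS
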